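/- Let μ : X → 𝔭 be a continuous K-equivariant map (K a compact group acting on X and orthogonally on 𝔭). For x ∈ X, the following are equivalent: (a) K·x is open in μ⁻¹(K·μ(x)); (b) the orbit K_{μ(x)}·x of the stabilizer K_{μ(x)} = {k ∈ K : k·μ(x) = μ(x)} is open in the fiber μ⁻¹(μ(x)). -/

import Mathlib

open Pointwise


/-- Let `K` be a compact topological group acting continuously on spaces `X` and `𝔭`, and let
`μ : X → 𝔭` be a continuous `K`-equivariant map.  For `x ∈ X` the following are equivalent:
(a) `K • x` is open in `μ⁻¹(K • μ(x))`;
(b) the orbit of the stabilizer `K_{μ(x)}` through `x` is open in the fiber `μ⁻¹(μ(x))`. -/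
theorem orbit_open_in_saturation_iff_stabilizer_orbit_open_in_fiber
    {K : Type*} [Group K] [TopologicalSpace K] [IsTopologicalGroup K] [CompactSpace K]
    {X : Type*} [TopologicalSpace X] [MulAction K X] [ContinuousSMul K X]
    {P : Type*} [TopologicalSpace P] [T2Space P] [MulAction K P] [ContinuousSMul K P]
    (μ : X → P) (hcont : Continuous μ) (hequiv : ∀ (k : K) (x : X), μ (k • x) = k • μ x)
    (x : X) :
    IsOpen (Subtype.val ⁻¹' (MulAction.orbit K x) :
        Set (μ ⁻¹' (MulAction.orbit K (μ x)))) ↔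
      IsOpen (Subtype.val ⁻¹' (MulAction.orbit (MulAction.stabilizer K (μ x)) x) :
        Set (μ ⁻¹' {μ x})) := by
  constructor
  · intro h
    rw [isOpen_induced_iff] at h ⊢
    obtain ⟨W, hWopen, hWeq⟩ := h
    refine ⟨W, hWopen, ?_⟩
    ext ⟨y, hy⟩
    have hyx : μ y = μ x := hy
    have hyS : y ∈ μ ⁻¹' MulAction.orbit K (μ x) := by
      simp only [Set.mem_preimage, hyx]
      exact MulAction.mem_orbit_self _
    constructor
    · intro (hyW : y ∈ W)
      have h1 : (⟨y, hyS⟩ : μ ⁻¹' MulAction.orbit K (μ x)) ∈ Subtype.val ⁻¹' W := hyW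
      rw [hWeq] at h1
      obtain ⟨k, hk⟩ := h1
      have hk' : k • x = y := hk
      have hkst : k ∈ MulAction.stabilizer K (μ x) := by
        have h2 := hequiv k x
        rw [hk'] at h2
        rw [MulAction.mem_stabilizer_iff, ← h2, hyx]
      exact ⟨⟨k, hkst⟩, hk'⟩
    · rintro ⟨⟨k, hkst⟩, hk⟩
      have hk' : k • x = y := hk
      have h1 : (⟨y, hyS⟩ : μ ⁻¹' MulAction.orbit K (μ x)) ∈
          Subtype.val ⁻¹' (MulAction.orbit K x) := ⟨k, hk'⟩
      rw [← hWeq] at h1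
      exact h1
  · intro h
    rw [isOpen_induced_iff] at h ⊢
    obtain ⟨U, hUopen, hUeq⟩ := h
    set C : Set (K × X) := {p | μ p.2 = p.1 • μ x ∧ p.1⁻¹ • p.2 ∉ U} with hC
    have hCclosed : IsClosed C := by
      apply IsClosed.inter
      · exact isClosed_eq (hcont.comp continuous_snd) (continuous_fst.smul continuous_const)
      · exact hUopen.isClosed_compl.preimage (continuous_fst.inv.smul continuous_snd)
    have hproj : IsClosed (Prod.snd '' C) := isClosedMap_snd_of_compactSpace C hCclosed
    set V := (Prod.snd '' C)ᶜ with hV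
    have hVopen : IsOpen V := hproj.isOpen_compl
    have hxV : x ∈ V := by
      intro hmem
      obtain ⟨⟨k, y⟩, ⟨hk1, hk2⟩, heq⟩ := hmem
      have heq' : y = x := heq
      rw [heq'] at hk1 hk2
      -- hk1 : μ x = k • μ x, hk2 : k⁻¹ • x ∉ U
      apply hk2
      simp only at hk1
      have hkinv : k⁻¹ ∈ MulAction.stabilizer K (μ x) := by
        rw [MulAction.mem_stabilizer_iff, inv_smul_eq_iff]
        exact hk1
      have hz : k⁻¹ • x ∈ μ ⁻¹' {μ x} := by
        rw [Set.mem_preimage, Set.mem_singleton_iff, hequiv, inv_smul_eq_iff]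
        exact hk1
      have h1 : (⟨k⁻¹ • x, hz⟩ : μ ⁻¹' {μ x}) ∈
          Subtype.val ⁻¹' (MulAction.orbit (MulAction.stabilizer K (μ x)) x) :=
        ⟨⟨k⁻¹, hkinv⟩, rfl⟩
      rw [← hUeq] at h1
      exact h1
    refine ⟨⋃ g : K, g • V, isOpen_iUnion fun g => hVopen.smul g, ?_⟩
    ext ⟨y, hyS⟩
    have hySx : μ y ∈ MulAction.orbit K (μ x) := hyS
    constructor
    · intro hyW
      obtain ⟨_, ⟨g, rfl⟩, hyg⟩ := hyW
      have hy' : g⁻¹ • y ∈ V := by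
        rw [← Set.mem_smul_set_iff_inv_smul_mem]
        exact hyg
      have hy'S : μ (g⁻¹ • y) ∈ MulAction.orbit K (μ x) := by
        obtain ⟨a, ha⟩ := hySx
        have ha' : a • μ x = μ y := ha
        exact ⟨g⁻¹ * a, by rw [hequiv]; show (g⁻¹ * a) • μ x = g⁻¹ • μ y; rw [mul_smul, ha']⟩
      obtain ⟨k, hk⟩ := hy'S
      have hk' : k • μ x = μ (g⁻¹ • y) := hk
      have hkU : k⁻¹ • g⁻¹ • y ∈ U := by
        by_contra hnot
        exact hy' ⟨(k, g⁻¹ • y), ⟨hk'.symm, hnot⟩, rfl⟩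
      have hzF : k⁻¹ • g⁻¹ • y ∈ μ ⁻¹' {μ x} := by
        rw [Set.mem_preimage, Set.mem_singleton_iff, hequiv, ← hk', inv_smul_smul]
      have h1 : (⟨k⁻¹ • g⁻¹ • y, hzF⟩ : μ ⁻¹' {μ x}) ∈ Subtype.val ⁻¹' U := hkU
      rw [hUeq] at h1
      obtain ⟨⟨s, hs⟩, hseq⟩ := h1
      have hseq' : s • x = k⁻¹ • g⁻¹ • y := hseq
      refine ⟨g * k * s, ?_⟩
      show (g * k * s) • x = y
      rw [mul_smul, mul_smul, hseq', smul_inv_smul, smul_inv_smul]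
    · rintro ⟨g, hg⟩
      have hg' : g • x = y := hg
      exact Set.mem_iUnion.2 ⟨g, hg' ▸ Set.smul_mem_smul_set hxV⟩
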